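/- Let Q be a real polynomial. Let p₁ = (x₁, y₁, z₁), …, p_n = (x_n, y_n, z_n) and q₁ = (x₁, v₁, w₁), …, q_n = (x_n, v_n, w_n) be points of S_Q such that x₁, …, x_n are pairwise distinct, and let b₁, …, b_m be real numbers with b_j ≠ x_i for all i and j. Then there exists a twisting map α of S_Q such that α(p_i) = q_i for every i and α fixes pointwise every fiber {(x, y, z) ∈ S_Q | x = b_j}, j = 1, …, m. -/

import Mathlib

/-- The affine surface `y² + z² = Q(x)` in `ℝ³`. -/
def SQ (Q : Polynomial ℝ) : Set (ℝ × ℝ × ℝ) :=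
  {v | v.2.1 ^ 2 + v.2.2 ^ 2 = Q.eval v.1}

/-- A twisting map of `ℝ³`: `(x,y,z) ↦ (x, f(x)y − g(x)z, g(x)y + f(x)z)` where
`f = p/d`, `g = q/d` for real polynomials `p, q, d` with `d` nowhere vanishing
and `p² + q² = d²` pointwise on `ℝ`. -/
def IsTwistingMap (α : ℝ × ℝ × ℝ → ℝ × ℝ × ℝ) : Prop :=
  ∃ p q d : Polynomial ℝ,
    (∀ t : ℝ, d.eval t ≠ 0) ∧
    (∀ t : ℝ, p.eval t ^ 2 + q.eval t ^ 2 = d.eval t ^ 2) ∧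
    ∀ v : ℝ × ℝ × ℝ,
      α v = (v.1,
        (p.eval v.1 / d.eval v.1) * v.2.1 - (q.eval v.1 / d.eval v.1) * v.2.2,
        (q.eval v.1 / d.eval v.1) * v.2.1 + (p.eval v.1 / d.eval v.1) * v.2.2)

open Complex in
lemma aux_circle (c s : ℝ) (h : c^2 + s^2 = 1) :
    ∃ a : ℝ, (1-3*a^2)^2-(3*a-a^3)^2 = c*(1+a^2)^3 ∧
      2*(1-3*a^2)*(3*a-a^3) = s*(1+a^2)^3 := by
  have habs : ‖(c + s*I : ℂ)‖ = 1 := by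
    rw [Complex.norm_def, Complex.normSq_apply]
    simp only [Complex.add_re, Complex.ofReal_re, Complex.mul_re, Complex.I_re, Complex.I_im,
      Complex.ofReal_im, Complex.add_im, Complex.mul_im]
    rw [show (c + (s * 0 - 0 * 1)) * (c + (s * 0 - 0 * 1)) + (0 + (s * 1 + 0 * 0)) * (0 + (s * 1 + 0 * 0)) = 1 by linear_combination h]
    exact Real.sqrt_one
  have hz0 : (↑c + ↑s*I : ℂ) ≠ 0 := by
    intro h0; rw [h0] at habs; simp at habs
  set θ := Complex.arg (↑c + ↑s*I) with hθdef
  have hexp : Complex.exp (θ * I) = ↑c + ↑s*I := by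
    have := Complex.norm_mul_exp_arg_mul_I (↑c + ↑s*I)
    rw [habs] at this; simpa using this
  have hθ := Complex.abs_arg_le_pi (↑c + ↑s*I)
  rw [← hθdef, abs_le] at hθ
  set φ := θ/6 with hφdef
  have hcφ : 0 < Real.cos φ := by
    apply Real.cos_pos_of_mem_Ioo
    constructor <;> simp only [hφdef] <;> [linarith [Real.pi_pos, hθ.1]; linarith [Real.pi_pos, hθ.2]]
  set cφ := Real.cos φ
  set sφ := Real.sin φ
  have hpyth : sφ^2 + cφ^2 = 1 := Real.sin_sq_add_cos_sq φ
  have hcφ0 : cφ ≠ 0 := ne_of_gt hcφ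
  set a := sφ / cφ with hadef
  have hc' : (cφ:ℂ) ≠ 0 := by exact_mod_cast hcφ0
  have e0 : ((1:ℂ) + a*I) * (cφ:ℂ) = ↑cφ + ↑sφ*I := by
    rw [hadef, Complex.ofReal_div]; field_simp
  have e1 : ((1:ℂ) + a*I) * (cφ:ℂ) = Complex.exp (↑φ*I) := by
    rw [e0, Complex.exp_mul_I, ← Complex.ofReal_cos, ← Complex.ofReal_sin]
  have e6 : ((1:ℂ) + a*I)^6 * (cφ:ℂ)^6 = ↑c + ↑s*I := by
    calc ((1:ℂ) + a*I)^6 * (cφ:ℂ)^6 = (((1:ℂ) + a*I) * (cφ:ℂ))^6 := by ring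
    _ = Complex.exp (↑φ*I)^6 := by rw [e1]
    _ = Complex.exp ((6:ℕ)*(↑φ*I)) := by rw [Complex.exp_nat_mul]
    _ = Complex.exp (↑θ*I) := by rw [hφdef]; push_cast; ring_nf
    _ = ↑c + ↑s*I := hexp
  have key : ((1:ℂ) + a*I)^6 =
      ((1-3*a^2)^2-(3*a-a^3)^2 : ℝ) + ((2*(1-3*a^2)*(3*a-a^3) : ℝ))*I := by
    push_cast
    linear_combination (15*(a:ℂ)^2 + 20*(a:ℂ)^3*I + 15*(a:ℂ)^4*(I^2-1) + 6*(a:ℂ)^5*I*(I^2-1) + (a:ℂ)^6*(I^4-I^2+1)) * Complex.I_sq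
  rw [key, ← Complex.ofReal_pow] at e6
  rw [Complex.ext_iff] at e6
  obtain ⟨hre, him⟩ := e6
  simp only [Complex.add_re, Complex.add_im, Complex.mul_re, Complex.mul_im, Complex.ofReal_re,
    Complex.ofReal_im, Complex.I_re, Complex.I_im] at hre him
  have hre' : ((1-3*a^2)^2-(3*a-a^3)^2) * cφ^6 = c := by linear_combination hre
  have him' : (2*(1-3*a^2)*(3*a-a^3)) * cφ^6 = s := by linear_combination him
  have h1 : (1+a^2) * cφ^2 = 1 := by
    rw [hadef]; field_simp; linear_combination hpyth
  refine ⟨a, ?_, ?_⟩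
  · linear_combination ((1+a^2)^3) * hre' - (((1-3*a^2)^2-(3*a-a^3)^2) * (((1+a^2)*cφ^2)^2 + (1+a^2)*cφ^2 + 1)) * h1
  · linear_combination ((1+a^2)^3) * him' - ((2*(1-3*a^2)*(3*a-a^3)) * (((1+a^2)*cφ^2)^2 + (1+a^2)*cφ^2 + 1)) * h1

lemma aux_rot {Y Z V W : ℝ} (h : V^2 + W^2 = Y^2 + Z^2) :
    ∃ a : ℝ, ((1-3*a^2)^2-(3*a-a^3)^2) * Y - (2*(1-3*a^2)*(3*a-a^3)) * Z = V * (1+a^2)^3 ∧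
      (2*(1-3*a^2)*(3*a-a^3)) * Y + ((1-3*a^2)^2-(3*a-a^3)^2) * Z = W * (1+a^2)^3 := by
  by_cases hN : Y^2 + Z^2 = 0
  · have hY : Y = 0 := by nlinarith [sq_nonneg Y, sq_nonneg Z]
    have hZ : Z = 0 := by nlinarith [sq_nonneg Y, sq_nonneg Z]
    have hV : V = 0 := by nlinarith [sq_nonneg V, sq_nonneg W]
    have hW : W = 0 := by nlinarith [sq_nonneg V, sq_nonneg W]
    exact ⟨0, by rw [hY, hZ, hV, hW]; norm_num⟩
  · obtain ⟨a, ha1, ha2⟩ := aux_circle ((Y*V + Z*W)/(Y^2+Z^2)) ((Y*W - Z*V)/(Y^2+Z^2))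
      (by field_simp; linear_combination (Y^2+Z^2) * h)
    refine ⟨a, ?_, ?_⟩
    · rw [ha1, ha2]; field_simp; ring
    · rw [ha1, ha2]; field_simp; ring

/-- Fiberwise very transitivity by twisting maps: given points `(xᵢ, yᵢ, zᵢ)` and
`(xᵢ, vᵢ, wᵢ)` of `S_Q` over pairwise distinct `xᵢ`, and base points `bⱼ` distinct
from all `xᵢ`, there is a twisting map sending each `pᵢ` to `qᵢ` and fixing
pointwise each fiber over the `bⱼ`. -/
theorem twisting_map_transitive (Q : Polynomial ℝ) (n m : ℕ)
    (x y z v w : Fin n → ℝ) (b : Fin m → ℝ)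
    (hx : Function.Injective x)
    (hp : ∀ i, (x i, y i, z i) ∈ SQ Q)
    (hq : ∀ i, (x i, v i, w i) ∈ SQ Q)
    (hb : ∀ i j, b j ≠ x i) :
    ∃ α : ℝ × ℝ × ℝ → ℝ × ℝ × ℝ, IsTwistingMap α ∧
      (∀ i, α (x i, y i, z i) = (x i, v i, w i)) ∧
      (∀ j, ∀ u ∈ SQ Q, u.1 = b j → α u = u) := by
  classical
  have haux : ∀ i : Fin n, ∃ a : ℝ,
      ((1-3*a^2)^2-(3*a-a^3)^2) * y i - (2*(1-3*a^2)*(3*a-a^3)) * z i = v i * (1+a^2)^3 ∧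
      (2*(1-3*a^2)*(3*a-a^3)) * y i + ((1-3*a^2)^2-(3*a-a^3)^2) * z i = w i * (1+a^2)^3 := by
    intro i
    have hpi := hp i; have hqi := hq i
    simp only [SQ, Set.mem_setOf_eq] at hpi hqi
    exact aux_rot (by rw [hqi, ← hpi])
  choose a ha1 ha2 using haux
  set T : Finset ℝ := Finset.image x Finset.univ ∪ Finset.image b Finset.univ with hT
  set F : ℝ → ℝ := fun t => if h : ∃ i, x i = t then a h.choose else 0 with hF
  set R : Polynomial ℝ := Lagrange.interpolate T id F with hR
  have hnode : ∀ t ∈ T, R.eval t = F t := by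
    intro t ht
    exact Lagrange.eval_interpolate_at_node F (Set.injOn_id _) ht
  have hRx : ∀ i, R.eval (x i) = a i := by
    intro i
    have hmem : x i ∈ T := by
      rw [hT]; exact Finset.mem_union_left _ (Finset.mem_image_of_mem x (Finset.mem_univ i))
    rw [hnode _ hmem]; simp only [hF]
    have hex : ∃ j, x j = x i := ⟨i, rfl⟩
    rw [dif_pos hex]
    exact congrArg a (hx hex.choose_spec)
  have hRb : ∀ j, R.eval (b j) = 0 := by
    intro j
    have hmem : b j ∈ T := by
      rw [hT]; exact Finset.mem_union_right _ (Finset.mem_image_of_mem b (Finset.mem_univ j))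
    rw [hnode _ hmem]; simp only [hF]
    rw [dif_neg]
    rintro ⟨i, hi⟩
    exact hb i j hi.symm
  set p : Polynomial ℝ := (1 - 3*R^2)^2 - (3*R - R^3)^2 with hpdef
  set q : Polynomial ℝ := 2*(1 - 3*R^2)*(3*R - R^3) with hqdef
  set d : Polynomial ℝ := (1 + R^2)^3 with hddef
  have hep : ∀ t : ℝ, p.eval t = (1 - 3*(R.eval t)^2)^2 - (3*(R.eval t) - (R.eval t)^3)^2 := by
    intro t; rw [hpdef]; simp
  have heq : ∀ t : ℝ, q.eval t = 2*(1 - 3*(R.eval t)^2)*(3*(R.eval t) - (R.eval t)^3) := by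
    intro t; rw [hqdef]; simp
  have hed : ∀ t : ℝ, d.eval t = (1 + (R.eval t)^2)^3 := by
    intro t; rw [hddef]; simp
  have hd0 : ∀ t : ℝ, d.eval t ≠ 0 := by
    intro t; rw [hed t]; positivity
  refine ⟨fun u => (u.1,
      (p.eval u.1 / d.eval u.1) * u.2.1 - (q.eval u.1 / d.eval u.1) * u.2.2,
      (q.eval u.1 / d.eval u.1) * u.2.1 + (p.eval u.1 / d.eval u.1) * u.2.2),
    ⟨p, q, d, hd0, ?_, fun u => rfl⟩, ?_, ?_⟩
  · intro t
    rw [hep t, heq t, hed t]; ring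
  · intro i
    have hdi := hd0 (x i)
    refine Prod.ext rfl (Prod.ext ?_ ?_)
    · show (p.eval (x i) / d.eval (x i)) * y i - (q.eval (x i) / d.eval (x i)) * z i = v i
      rw [hep, heq, hed, hRx i]
      rw [div_mul_eq_mul_div, div_mul_eq_mul_div, div_sub_div_same, div_eq_iff (by positivity)]
      linear_combination ha1 i
    · show (q.eval (x i) / d.eval (x i)) * y i + (p.eval (x i) / d.eval (x i)) * z i = w i
      rw [hep, heq, hed, hRx i]
      rw [div_mul_eq_mul_div, div_mul_eq_mul_div, ← add_div, div_eq_iff (by positivity)]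
      linear_combination ha2 i
  · intro j u hu h1
    have e1 : p.eval u.1 = 1 := by rw [h1, hep, hRb j]; norm_num
    have e2 : q.eval u.1 = 0 := by rw [h1, heq, hRb j]; norm_num
    have e3 : d.eval u.1 = 1 := by rw [h1, hed, hRb j]; norm_num
    refine Prod.ext rfl (Prod.ext ?_ ?_)
    · show (p.eval u.1 / d.eval u.1) * u.2.1 - (q.eval u.1 / d.eval u.1) * u.2.2 = u.2.1
      rw [e1, e2, e3]; norm_num
    · show (q.eval u.1 / d.eval u.1) * u.2.1 + (p.eval u.1 / d.eval u.1) * u.2.2 = u.2.2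
      rw [e1, e2, e3]; norm_num
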